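/- The greatest common divisor of all Fermat-Wilson quotients g_p, taken over all non-Wilson primes p, equals 24. In particular, no Fermat-Wilson quotient is a prime number. -/

import Mathlib

/-- The Fermat-Wilson quotient `g_p = (w_p^(p-1) - 1)/p` where `w_p = ((p-1)!+1)/p`. -/
def fermatWilsonQuotient (p : ℕ) : ℤ :=
  (((((p - 1).factorial : ℤ) + 1) / p) ^ (p - 1) - 1) / p

lemma fwq_dvd_24 (p : ℕ) (hp : p.Prime) (hnd : ¬ p ^ 2 ∣ (p - 1).factorial + 1) :
    (24 : ℤ) ∣ fermatWilsonQuotient p := by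
  rcases lt_or_ge p 5 with h5 | h5
  · interval_cases p <;> simp_all [fermatWilsonQuotient, Nat.factorial]
  · haveI : Fact p.Prime := ⟨hp⟩
    set N : ℤ := ((p - 1).factorial : ℤ) + 1 with hN
    have hp0 : (p : ℤ) ≠ 0 := by exact_mod_cast hp.ne_zero
    -- Wilson: p ∣ N
    have hpd : (p : ℤ) ∣ N := by
      have : ((N : ℤ) : ZMod p) = 0 := by
        rw [hN]; push_cast
        rw [ZMod.wilsons_lemma]; ring
      exact (ZMod.intCast_zmod_eq_zero_iff_dvd N p).mp this
    set w : ℤ := N / p with hwdef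
    have hw : (p : ℤ) * w = N := Int.mul_ediv_cancel' hpd
    have hwdvdN : w ∣ N := ⟨p, by rw [← hw]; ring⟩
    -- p does not divide w
    have hpw : ¬ (p : ℤ) ∣ w := by
      intro hdvd
      apply hnd
      obtain ⟨c, hc⟩ := hdvd
      have hsq : ((p ^ 2 : ℕ) : ℤ) ∣ (((p - 1).factorial + 1 : ℕ) : ℤ) := by
        push_cast
        exact ⟨c, by rw [← hN, ← hw, hc]; ring⟩
      exact_mod_cast hsq
    -- N is odd
    have hNodd : Odd N := by
      obtain ⟨k, hk⟩ := Nat.dvd_factorial (by norm_num : 0 < 2) (by omega : 2 ≤ p - 1)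
      exact ⟨(k : ℤ), by rw [hN, hk]; push_cast; ring⟩
    have hwodd : Odd w := by
      rcases Int.even_or_odd w with he | ho
      · exfalso
        have : Even N := by rw [← hw]; exact he.mul_left _
        exact ((Int.not_odd_iff_even.mpr this)) hNodd
      · exact ho
    -- 8 ∣ w^2 - 1
    have h8 : (8 : ℤ) ∣ w ^ 2 - 1 := by
      obtain ⟨k, hk⟩ := hwodd
      obtain ⟨m, hm⟩ := Int.even_mul_succ_self k
      exact ⟨m, by rw [hk]; linear_combination 4 * hm⟩
    -- 3 ∤ N
    have h3N : ¬ (3 : ℤ) ∣ N := by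
      obtain ⟨t, ht⟩ := Nat.dvd_factorial (by norm_num : 0 < 3) (by omega : 3 ≤ p - 1)
      intro ⟨s, hs⟩
      have htZ : ((p - 1).factorial : ℤ) = 3 * t := by exact_mod_cast ht
      rw [hN, htZ] at hs
      omega
    have h3w : ¬ (3 : ℤ) ∣ w := fun h => h3N (h.trans hwdvdN)
    -- 3 ∣ w^2 - 1
    have h3 : (3 : ℤ) ∣ w ^ 2 - 1 := by
      have hw3 : (w : ZMod 3) ≠ 0 := fun h =>
        h3w (by exact_mod_cast (ZMod.intCast_zmod_eq_zero_iff_dvd w 3).mp h)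
      have : ((w ^ 2 - 1 : ℤ) : ZMod 3) = 0 := by
        push_cast
        revert hw3
        generalize ((w : ℤ) : ZMod 3) = x
        revert x
        decide
      exact_mod_cast (ZMod.intCast_zmod_eq_zero_iff_dvd _ 3).mp this
    -- 24 ∣ w^2 - 1
    have hcop83 : IsCoprime (8 : ℤ) 3 := by
      rw [Int.isCoprime_iff_gcd_eq_one]; decide
    have h24sq : (24 : ℤ) ∣ w ^ 2 - 1 := by
      have := hcop83.mul_dvd h8 h3
      simpa using this
    -- w^2 - 1 ∣ w^(p-1) - 1
    have hpodd : Odd p := hp.odd_of_ne_two (by omega)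
    obtain ⟨m, hm⟩ := hpodd
    have h24 : (24 : ℤ) ∣ w ^ (p - 1) - 1 := by
      refine h24sq.trans ?_
      have : w ^ (p - 1) = (w ^ 2) ^ m := by
        rw [show p - 1 = 2 * m from by omega, pow_mul]
      rw [this]
      simpa using sub_dvd_pow_sub_pow (w ^ 2) 1 m
    -- Fermat: p ∣ w^(p-1) - 1
    have hpF : (p : ℤ) ∣ w ^ (p - 1) - 1 := by
      have hwz : (w : ZMod p) ≠ 0 := fun h =>
        hpw ((ZMod.intCast_zmod_eq_zero_iff_dvd w p).mp h)
      have hF := ZMod.pow_card_sub_one_eq_one hwz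
      have : ((w ^ (p - 1) - 1 : ℤ) : ZMod p) = 0 := by
        push_cast
        rw [hF]; ring
      exact (ZMod.intCast_zmod_eq_zero_iff_dvd _ p).mp this
    -- 24 and p are coprime
    have hcopnat : Nat.Coprime p 24 := by
      rw [hp.coprime_iff_not_dvd]
      intro hdvd
      have hle : p ≤ 24 := Nat.le_of_dvd (by norm_num) hdvd
      interval_cases p <;> revert hp hdvd <;> decide
    have hcop : IsCoprime (24 : ℤ) (p : ℤ) := by
      have := Nat.isCoprime_iff_coprime.mpr hcopnat.symm
      exact_mod_cast this
    obtain ⟨c, hc⟩ := hcop.mul_dvd h24 hpF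
    refine ⟨c, ?_⟩
    show (w ^ (p - 1) - 1) / p = 24 * c
    rw [show w ^ (p - 1) - 1 = (p : ℤ) * (24 * c) from by rw [hc]; ring,
      Int.mul_ediv_cancel_left _ hp0]

lemma fwq7 : fermatWilsonQuotient 7 = 170578899504 := by
  norm_num [fermatWilsonQuotient, Nat.factorial]

lemma fwq11 : fermatWilsonQuotient 11 =
    1387752405580695978098914368989316131852701063520729400 := by
  norm_num [fermatWilsonQuotient, Nat.factorial]

theorem gcd_fermat_wilson_quotients :
    (∀ p : ℕ, p.Prime → ¬ p ^ 2 ∣ (p - 1).factorial + 1 →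
        (24 : ℤ) ∣ fermatWilsonQuotient p) ∧
    (∀ d : ℤ, (∀ p : ℕ, p.Prime → ¬ p ^ 2 ∣ (p - 1).factorial + 1 →
        d ∣ fermatWilsonQuotient p) → d ∣ 24) ∧
    (∀ p : ℕ, p.Prime → ¬ p ^ 2 ∣ (p - 1).factorial + 1 →
        ¬ Prime (fermatWilsonQuotient p)) := by
  refine ⟨fwq_dvd_24, ?_, ?_⟩
  · intro d hd
    have h7 := hd 7 (by norm_num) (by decide)
    have h11 := hd 11 (by norm_num) (by decide)
    rw [fwq7] at h7
    rw [fwq11] at h11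
    have hg := Int.dvd_coe_gcd h7 h11
    have hgv : Int.gcd (170578899504)
        (1387752405580695978098914368989316131852701063520729400) = 24 := by
      norm_num
    rw [hgv] at hg
    exact_mod_cast hg
  · intro p hp hnd hpr
    obtain ⟨c, hc⟩ := fwq_dvd_24 p hp hnd
    have hnatp := Int.prime_iff_natAbs_prime.mp hpr
    rcases hpr.irreducible.isUnit_or_isUnit hc with h | h
    · rw [Int.isUnit_iff] at h
      rcases h with h | h <;> norm_num at h
    · rw [Int.isUnit_iff] at h
      rw [hc] at hnatp
      rcases h with h | h <;> subst h <;> norm_num at hnatp
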